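/- Let f be a legal configuration of the edged cube Q̄_L accessible from the solved configuration f_solved. Then for each pair of colors (γ, γ′) and each non-corner edge cluster C, there is at most one pair of coupled edge cells (c, c′) with c ∈ C, f(c) = γ and f(c′) = γ′. Similarly, for each triple of colors (γ, γ′, γ″), there is at most one triple of mutually coupled corner cells carrying those three colors under f. -/

import Mathlib

universe u v

namespace InfRubik

/-- The three axes of the cube. -/
inductive Axis : Type
  | x | y | z
  deriving DecidableEq

/-- The six colors of the Rubik's cube.  A *configuration* is a map from cells to
`Option Color`, where `none` plays the role of the non-color `NaC`. -/
inductive Color : Type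
  | red | white | green | orange | yellow | blue
  deriving DecidableEq

/-- The set `L̄† = -L ∪ {0} ∪ L ∪ {±∞}` of extended coordinates. -/
inductive ExtCoord (L : Type u) : Type u
  | neg : L → ExtCoord L
  | zero : ExtCoord L
  | pos : L → ExtCoord L
  | negInf : ExtCoord L
  | posInf : ExtCoord L

namespace ExtCoord

variable {L : Type u}

/-- The reflection `r ↦ -r`. -/
def reflect : ExtCoord L → ExtCoord L
  | .neg r => .pos r
  | .zero => .zero
  | .pos r => .neg r
  | .negInf => .posInf
  | .posInf => .negInf

@[simp] theorem reflect_reflect (a : ExtCoord L) : a.reflect.reflect = a := by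
  cases a <;> rfl

/-- Whether a coordinate is `±∞`. -/
def isInfB : ExtCoord L → Bool
  | .negInf => true
  | .posInf => true
  | _ => false

@[simp] theorem isInfB_reflect (a : ExtCoord L) : a.reflect.isInfB = a.isInfB := by
  cases a <;> rfl

/-- Whether a coordinate is `0`. -/
def isZeroB : ExtCoord L → Bool
  | .zero => true
  | _ => false

@[simp] theorem isZeroB_reflect (a : ExtCoord L) : a.reflect.isZeroB = a.isZeroB := by
  cases a <;> rfl

end ExtCoord

/-- A point of the ambient space `L̄† × L̄† × L̄†`. -/
abbrev Triple (L : Type u) := ExtCoord L × ExtCoord L × ExtCoord L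

/-- The coordinate of a point along an axis. -/
def Triple.coord {L : Type u} : Axis → Triple L → ExtCoord L
  | .x, p => p.1
  | .y, p => p.2.1
  | .z, p => p.2.2

/-- Quarter-turn rotation of the ambient space about an axis (right-hand rule). -/
def rot {L : Type u} : Axis → Triple L → Triple L
  | .x, p => (p.1, p.2.2.reflect, p.2.1)
  | .y, p => (p.2.2, p.2.1, p.1.reflect)
  | .z, p => (p.2.1.reflect, p.1, p.2.2)

/-- Inverse quarter-turn rotation of the ambient space about an axis. -/
def rotInv {L : Type u} : Axis → Triple L → Triple L
  | .x, p => (p.1, p.2.2, p.2.1.reflect)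
  | .y, p => (p.2.2.reflect, p.2.1, p.1)
  | .z, p => (p.2.1, p.1.reflect, p.2.2)

@[simp] theorem rotInv_rot {L : Type u} (i : Axis) (p : Triple L) : rotInv i (rot i p) = p := by
  cases i <;> simp [rot, rotInv]

@[simp] theorem rot_rotInv {L : Type u} (i : Axis) (p : Triple L) : rot i (rotInv i p) = p := by
  cases i <;> simp [rot, rotInv]

/-- The number of infinite coordinates of a point. -/
def infCount {L : Type u} (p : Triple L) : ℕ :=
  (if p.1.isInfB then 1 else 0) + (if p.2.1.isInfB then 1 else 0) +
    (if p.2.2.isInfB then 1 else 0)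

/-- The number of zero coordinates of a point. -/
def zeroCount {L : Type u} (p : Triple L) : ℕ :=
  (if p.1.isZeroB then 1 else 0) + (if p.2.1.isZeroB then 1 else 0) +
    (if p.2.2.isZeroB then 1 else 0)

theorem infCount_rot {L : Type u} (i : Axis) (p : Triple L) : infCount (rot i p) = infCount p := by
  obtain ⟨a, b, c⟩ := p
  cases i <;> cases a <;> cases b <;> cases c <;> rfl

theorem infCount_rotInv {L : Type u} (i : Axis) (p : Triple L) :
    infCount (rotInv i p) = infCount p := by
  obtain ⟨a, b, c⟩ := p
  cases i <;> cases a <;> cases b <;> cases c <;> rfl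

@[simp] theorem coord_rot_self {L : Type u} (i : Axis) (p : Triple L) :
    (rot i p).coord i = p.coord i := by
  cases i <;> rfl

@[simp] theorem coord_rotInv_self {L : Type u} (i : Axis) (p : Triple L) :
    (rotInv i p).coord i = p.coord i := by
  cases i <;> rfl

/-- A cell of the *edgeless* cube `Q_L`: a point of the ambient space with exactly one
infinite coordinate. -/
def Cell (L : Type u) : Type u := {p : Triple L // infCount p = 1}

open Classical in
/-- The underlying map on points of the quarter-turn twist `T_{i,α}`. -/
noncomputable def qtTriple {L : Type u} (i : Axis) (α : ExtCoord L) (p : Triple L) : Triple L :=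
  if p.coord i = α then rot i p else p

open Classical in
/-- The underlying map on points of the inverse quarter-turn twist `T_{i,α}⁻¹`. -/
noncomputable def qtTripleInv {L : Type u} (i : Axis) (α : ExtCoord L) (p : Triple L) : Triple L :=
  if p.coord i = α then rotInv i p else p

theorem qtTripleInv_qtTriple {L : Type u} (i : Axis) (α : ExtCoord L) (p : Triple L) :
    qtTripleInv i α (qtTriple i α p) = p := by
  classical
  by_cases h : p.coord i = α <;> simp [qtTriple, qtTripleInv, h]

theorem qtTriple_qtTripleInv {L : Type u} (i : Axis) (α : ExtCoord L) (p : Triple L) :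
    qtTriple i α (qtTripleInv i α p) = p := by
  classical
  by_cases h : p.coord i = α <;> simp [qtTriple, qtTripleInv, h]

theorem infCount_qtTriple {L : Type u} (i : Axis) (α : ExtCoord L) (p : Triple L) :
    infCount (qtTriple i α p) = infCount p := by
  classical
  by_cases h : p.coord i = α <;> simp [qtTriple, h, infCount_rot]

theorem infCount_qtTripleInv {L : Type u} (i : Axis) (α : ExtCoord L) (p : Triple L) :
    infCount (qtTripleInv i α p) = infCount p := by
  classical
  by_cases h : p.coord i = α <;> simp [qtTripleInv, h, infCount_rotInv]

/-- The quarter-turn twist `T_{i,α}` of the edgeless cube, as a permutation of cells. -/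
noncomputable def quarterTurn {L : Type u} (i : Axis) (α : ExtCoord L) : Equiv.Perm (Cell L) where
  toFun c := ⟨qtTriple i α c.1, by rw [infCount_qtTriple]; exact c.2⟩
  invFun c := ⟨qtTripleInv i α c.1, by rw [infCount_qtTripleInv]; exact c.2⟩
  left_inv c := Subtype.ext (qtTripleInv_qtTriple i α c.1)
  right_inv c := Subtype.ext (qtTriple_qtTripleInv i α c.1)

/-- The basic twists of the edgeless cube: quarter turns, half turns and reverse
quarter turns of a single layer. -/
def IsBasic (L : Type u) (π : Equiv.Perm (Cell L)) : Prop :=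
  ∃ (i : Axis) (α : ExtCoord L),
    π = quarterTurn i α ∨ π = quarterTurn i α ^ 2 ∨ π = (quarterTurn i α)⁻¹

/-! ### The edged cube -/

/-- How a quarter-turn about axis `i` transports the face tag of a cell. -/
def tagMap : Axis → Axis → Axis
  | .x, .x => .x
  | .x, .y => .z
  | .x, .z => .y
  | .y, .x => .z
  | .y, .y => .y
  | .y, .z => .x
  | .z, .x => .y
  | .z, .y => .x
  | .z, .z => .z

@[simp] theorem tagMap_tagMap (i j : Axis) : tagMap i (tagMap i j) = j := by
  cases i <;> cases j <;> rfl

theorem isInfB_coord_tagMap_rot {L : Type u} (i j : Axis) (p : Triple L) :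
    ((rot i p).coord (tagMap i j)).isInfB = (p.coord j).isInfB := by
  cases i <;> cases j <;> simp [rot, Triple.coord, tagMap]

theorem isInfB_coord_tagMap_rotInv {L : Type u} (i j : Axis) (p : Triple L) :
    ((rotInv i p).coord (tagMap i j)).isInfB = (p.coord j).isInfB := by
  cases i <;> cases j <;> simp [rotInv, Triple.coord, tagMap]

/-- A cell of the *edged* cube `Q̄_L`: a point of the ambient space together with a tag
naming an axis, such that the coordinate along the tagged axis is infinite (the tag
indicates the face to which the cell belongs). -/
def ECell (L : Type u) : Type u := {q : Triple L × Axis // (q.1.coord q.2).isInfB = true}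

open Classical in
/-- The underlying map of the quarter-turn twist `T_{i,α}` of the edged cube. -/
noncomputable def eqtFun {L : Type u} (i : Axis) (α : ExtCoord L) (q : Triple L × Axis) :
    Triple L × Axis :=
  if q.1.coord i = α then (rot i q.1, tagMap i q.2) else q

open Classical in
/-- The underlying map of the reverse quarter-turn twist of the edged cube. -/
noncomputable def eqtFunInv {L : Type u} (i : Axis) (α : ExtCoord L) (q : Triple L × Axis) :
    Triple L × Axis :=
  if q.1.coord i = α then (rotInv i q.1, tagMap i q.2) else q

theorem eqtFunInv_eqtFun {L : Type u} (i : Axis) (α : ExtCoord L) (q : Triple L × Axis) :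
    eqtFunInv i α (eqtFun i α q) = q := by
  classical
  by_cases h : q.1.coord i = α <;> simp [eqtFun, eqtFunInv, h]

theorem eqtFun_eqtFunInv {L : Type u} (i : Axis) (α : ExtCoord L) (q : Triple L × Axis) :
    eqtFun i α (eqtFunInv i α q) = q := by
  classical
  by_cases h : q.1.coord i = α <;> simp [eqtFun, eqtFunInv, h]

theorem isInfB_eqtFun {L : Type u} (i : Axis) (α : ExtCoord L) (q : Triple L × Axis) :
    (((eqtFun i α q).1.coord (eqtFun i α q).2)).isInfB = ((q.1.coord q.2)).isInfB := by
  classical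
  by_cases h : q.1.coord i = α <;> simp [eqtFun, h, isInfB_coord_tagMap_rot]

theorem isInfB_eqtFunInv {L : Type u} (i : Axis) (α : ExtCoord L) (q : Triple L × Axis) :
    (((eqtFunInv i α q).1.coord (eqtFunInv i α q).2)).isInfB = ((q.1.coord q.2)).isInfB := by
  classical
  by_cases h : q.1.coord i = α <;> simp [eqtFunInv, h, isInfB_coord_tagMap_rotInv]

/-- The quarter-turn twist `T_{i,α}` of the edged cube, as a permutation of cells.  A face
twist moves, besides the cells of its face, also the coupled edge and corner cells of the
adjacent faces lying in the twisted layer. -/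
noncomputable def equarterTurn {L : Type u} (i : Axis) (α : ExtCoord L) :
    Equiv.Perm (ECell L) where
  toFun c := ⟨eqtFun i α c.1, by rw [isInfB_eqtFun]; exact c.2⟩
  invFun c := ⟨eqtFunInv i α c.1, by rw [isInfB_eqtFunInv]; exact c.2⟩
  left_inv c := Subtype.ext (eqtFunInv_eqtFun i α c.1)
  right_inv c := Subtype.ext (eqtFun_eqtFunInv i α c.1)

/-- The basic twists of the edged cube. -/
def IsEBasic (L : Type u) (π : Equiv.Perm (ECell L)) : Prop :=
  ∃ (i : Axis) (α : ExtCoord L),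
    π = equarterTurn i α ∨ π = equarterTurn i α ^ 2 ∨ π = (equarterTurn i α)⁻¹

/-! ### Transfinite sequences of twists and their action on labellings -/

open Classical in
/-- The eventual value of an ordinal-indexed family of `Option`-values: `some v` if the family
stabilizes on `some v` before `lam`, and `none` otherwise. -/
noncomputable def eventualVal {X : Type u} (lam : Ordinal.{v})
    (g : ∀ η, η < lam → Option X) : Option X :=
  if h : ∃ v : X, ∃ γ, γ < lam ∧ ∀ η (hη : η < lam), γ ≤ η → g η hη = some v
  then some h.choose else none

/-- Applying an ordinal-indexed sequence of permutations to an initial labelling: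
`run σ f0 θ` is the labelling obtained after the first `θ` moves, with
`f_{η+1}(c) = f_η(σ_η⁻¹ c)` at successors and the eventual value (or `NaC = none`)
at limits. -/
noncomputable def run {Cl : Type v} {X : Type u} (σ : Ordinal.{v} → Equiv.Perm Cl)
    (f0 : Cl → Option X) (θ : Ordinal.{v}) : Cl → Option X :=
  Ordinal.limitRecOn (motive := fun _ => Cl → Option X) θ f0
    (fun η fη c => fη ((σ η)⁻¹ c))
    (fun lam _ prev c => eventualVal lam (fun η h => prev η h c))

/-- A (transfinite) sequence of twists of length `len`, each of which satisfies the
predicate `B` (being a basic twist). -/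
structure TwistSeq (Cl : Type v) (B : Equiv.Perm Cl → Prop) : Type (v + 1) where
  len : Ordinal.{v}
  seq : Ordinal.{v} → Equiv.Perm Cl
  basic : ∀ η, η < len → B (seq η)

namespace TwistSeq

variable {Cl : Type v} {B : Equiv.Perm Cl → Prop}

/-- The terminal labelling obtained by applying a sequence of twists to `f0`. -/
noncomputable def terminal (s : TwistSeq Cl B) {X : Type u} (f0 : Cl → Option X) :
    Cl → Option X :=
  run s.seq f0 s.len

/-- A sequence of twists is convergent over `f0` if the terminal labelling is legal,
i.e. never takes the value `NaC = none`. -/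
def ConvOver (s : TwistSeq Cl B) {X : Type u} (f0 : Cl → Option X) : Prop :=
  ∀ c, s.terminal f0 c ≠ none

/-- A sequence of twists is universally convergent if it is convergent over the identity
labelling. -/
def UnivConv (s : TwistSeq Cl B) : Prop := s.ConvOver (fun c => some c)

/-- A sequence is twist-finite if each twist occurs in it only finitely many times. -/
def TwistFinite (s : TwistSeq Cl B) : Prop :=
  ∀ π : Equiv.Perm Cl, {η : Ordinal | η < s.len ∧ s.seq η = π}.Finite

/-- Two sequences are equivalent, `σ⃗ ∼ τ⃗`, when they produce the same terminal
configuration over every initial configuration. -/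
def Sim (s t : TwistSeq Cl B) : Prop :=
  ∀ f : Cl → Option Color, s.terminal f = t.terminal f

/-- Concatenation of twist sequences: `s.concat t` performs `s` and then `t`. -/
noncomputable def concat (s t : TwistSeq Cl B) : TwistSeq Cl B where
  len := s.len + t.len
  seq := fun η => if η < s.len then s.seq η else t.seq (η - s.len)
  basic := by
    intro η hη
    by_cases h : η < s.len
    · simpa [h] using s.basic η h
    · have hc : 0 < t.len := by
        rcases eq_zero_or_pos t.len with h0 | h0
        · rw [h0, add_zero] at hη; exact absurd hη h
        · exact h0
      have h2 : η - s.len < t.len := Ordinal.sub_lt_of_lt_add hη hc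
      simpa [h] using t.basic _ h2

/-- The empty sequence of twists. -/
def empty (Cl : Type v) (B : Equiv.Perm Cl → Prop) : TwistSeq Cl B where
  len := 0
  seq := fun _ => 1
  basic := fun η hη => absurd hη (by simp)

/-- `n`-fold self-concatenation of a sequence of twists. -/
noncomputable def npow (s : TwistSeq Cl B) : ℕ → TwistSeq Cl B
  | 0 => empty Cl B
  | n + 1 => (npow s n).concat s

end TwistSeq

/-- Basic sequences of twists of the edgeless cube `Q_L`. -/
abbrev BasicSeq (L : Type u) := TwistSeq (Cell L) (IsBasic L)

/-- Basic sequences of twists of the edged cube `Q̄_L`. -/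
abbrev EBasicSeq (L : Type u) := TwistSeq (ECell L) (IsEBasic L)

/-- `f` is accessible from `f0` when some basic sequence applied to `f0` is convergent with
terminal configuration `f`. -/
def Accessible {Cl : Type v} (B : Equiv.Perm Cl → Prop) (f0 f : Cl → Option Color) : Prop :=
  ∃ s : TwistSeq Cl B, s.ConvOver f0 ∧ s.terminal f0 = f

/-- A labelling is legal if it never takes the value `NaC = none`. -/
def IsLegal {Cl : Type v} {X : Type u} (f : Cl → Option X) : Prop := ∀ c, f c ≠ none

/-! ### Clusters, faces, and distinguished configurations -/

/-- The group of permutations of cells of the edgeless cube generated by the basic twists. -/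
def twistGroup (L : Type u) : Subgroup (Equiv.Perm (Cell L)) :=
  Subgroup.closure {π | IsBasic L π}

/-- The cluster of a cell of the edgeless cube: its orbit under the group generated by the
basic twists. -/
def cluster {L : Type u} (c : Cell L) : Set (Cell L) :=
  {d | ∃ g ∈ twistGroup L, g c = d}

/-- The group of permutations of cells of the edged cube generated by the basic twists. -/
def etwistGroup (L : Type u) : Subgroup (Equiv.Perm (ECell L)) :=
  Subgroup.closure {π | IsEBasic L π}

/-- The cluster of a cell of the edged cube. -/
def ecluster {L : Type u} (c : ECell L) : Set (ECell L) :=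
  {d | ∃ g ∈ etwistGroup L, g c = d}

open Classical in
/-- The solved configuration of the edgeless cube: each face gets one of six distinct
colors. -/
noncomputable def fSolved (L : Type u) : Cell L → Option Color := fun c =>
  if c.1.1 = ExtCoord.posInf then some .red
  else if c.1.1 = ExtCoord.negInf then some .orange
  else if c.1.2.1 = ExtCoord.posInf then some .blue
  else if c.1.2.1 = ExtCoord.negInf then some .green
  else if c.1.2.2 = ExtCoord.posInf then some .white
  else some .yellow

/-- The color of each face: the face is named by the axis and the sign (`true` = `+∞`). -/
def faceColor : Axis → Bool → Color
  | .x, true => .red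
  | .x, false => .orange
  | .y, true => .blue
  | .y, false => .green
  | .z, true => .white
  | .z, false => .yellow

open Classical in
/-- The solved configuration of the edged cube. -/
noncomputable def efSolved (L : Type u) : ECell L → Option Color := fun c =>
  if c.1.1.coord c.1.2 = ExtCoord.posInf then some (faceColor c.1.2 true)
  else some (faceColor c.1.2 false)

/-- A center cell of the edgeless cube: two of its coordinates are `0`. -/
def IsCenter {L : Type u} (c : Cell L) : Prop := zeroCount c.1 = 2

/-- The global rotation of the whole cube about an axis, as a permutation of the cells of
the edgeless cube. -/
def rotAllPerm {L : Type u} (i : Axis) : Equiv.Perm (Cell L) where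
  toFun c := ⟨rot i c.1, by rw [infCount_rot]; exact c.2⟩
  invFun c := ⟨rotInv i c.1, by rw [infCount_rotInv]; exact c.2⟩
  left_inv c := Subtype.ext (rotInv_rot i c.1)
  right_inv c := Subtype.ext (rot_rotInv i c.1)

/-- The group of global rotations of the edgeless cube. -/
def rotGroup (L : Type u) : Subgroup (Equiv.Perm (Cell L)) :=
  Subgroup.closure (Set.range (rotAllPerm (L := L)))

/-- A configuration of the edgeless cube is standard if every non-center cluster contains
exactly four cells of each of the six colors, and its restriction to the center cluster is
obtained from the solved configuration by a global rotation of the cube. -/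
def Standard {L : Type u} (f : Cell L → Option Color) : Prop :=
  (∀ c : Cell L, ¬IsCenter c → ∀ γ : Color, {d ∈ cluster c | f d = some γ}.ncard = 4) ∧
  ∃ g ∈ rotGroup L, ∀ d : Cell L, IsCenter d → f d = fSolved L (g⁻¹ d)

/-- A configuration is invariant under all quarter-turn face twists. -/
def FaceInvariant {L : Type u} (f : Cell L → Option Color) : Prop :=
  ∀ (i : Axis) (α : ExtCoord L), α.isInfB = true →
    ∀ c : Cell L, f ((quarterTurn i α)⁻¹ c) = f c

/-! ### Quadrants and cluster configurations -/

/-- The upper-right quadrant `D` of the Front face: the cells `(x, y, +∞)` with `x ∈ L`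
and `y ∈ {0} ∪ L`; every non-center cluster has a unique representative in `D`. -/
def Dset (L : Type u) : Set (Cell L) :=
  {c | ∃ (a : L) (b : ExtCoord L), (b = ExtCoord.zero ∨ ∃ r : L, b = ExtCoord.pos r) ∧
    c.1 = (ExtCoord.pos a, b, ExtCoord.posInf)}

/-- Two cells lie in the same face quadrant (an image of `D` under a global rotation). -/
def SameQuadrant {L : Type u} (d d' : Cell L) : Prop :=
  ∃ g ∈ rotGroup L, d ∈ (fun c => g c) '' Dset L ∧ d' ∈ (fun c => g c) '' Dset L

/-! ### Coupled cells of the edged cube -/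

/-- Two cells of the edged cube are coupled if they occupy the same location but belong to
different faces (they are parts of a common edge or corner cubie). -/
def Coupled {L : Type u} (c c' : ECell L) : Prop := c.1.1 = c'.1.1 ∧ c.1.2 ≠ c'.1.2

/-- An edge cell: exactly two infinite coordinates. -/
def IsEdgeCell {L : Type u} (c : ECell L) : Prop := infCount c.1.1 = 2

/-- A corner cell: three infinite coordinates. -/
def IsCornerCell {L : Type u} (c : ECell L) : Prop := infCount c.1.1 = 3

/-- An edge-cross cell: an edge cell one of whose coordinates is `0`. -/
def IsEdgeCross {L : Type u} (c : ECell L) : Prop :=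
  IsEdgeCell c ∧ 0 < zeroCount c.1.1

/-! ### Auxiliary development for `color_coupling` -/

section Aux

/-- Symbolic abstraction of an extended coordinate. -/
inductive Sym : Type
  | pinf | ninf | spos | sneg | szero
  deriving DecidableEq

instance : Fintype Sym :=
  ⟨{Sym.pinf, Sym.ninf, Sym.spos, Sym.sneg, Sym.szero}, fun a => by cases a <;> simp⟩

instance : Fintype Axis :=
  ⟨{Axis.x, Axis.y, Axis.z}, fun a => by cases a <;> simp⟩

def symOf {L : Type u} : ExtCoord L → Sym
  | .posInf => .pinf
  | .negInf => .ninf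
  | .pos _ => .spos
  | .neg _ => .sneg
  | .zero => .szero

abbrev SymT : Type := Sym × Sym × Sym

def symT {L : Type u} (p : Triple L) : SymT := (symOf p.1, symOf p.2.1, symOf p.2.2)

def reflS : Sym → Sym
  | .pinf => .ninf | .ninf => .pinf | .spos => .sneg | .sneg => .spos | .szero => .szero

def isInfS : Sym → Bool
  | .pinf => true | .ninf => true | _ => false

def negS : Sym → Bool
  | .ninf => true | .sneg => true | _ => false

def isZeroS : Sym → Bool
  | .szero => true | _ => false

def coordS : Axis → SymT → Sym
  | .x, s => s.1 | .y, s => s.2.1 | .z, s => s.2.2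

def rotS : Axis → SymT → SymT
  | .x, s => (s.1, reflS s.2.2, s.2.1)
  | .y, s => (s.2.2, s.2.1, reflS s.1)
  | .z, s => (reflS s.2.1, s.1, s.2.2)

def rotInvS : Axis → SymT → SymT
  | .x, s => (s.1, s.2.2, reflS s.2.1)
  | .y, s => (reflS s.2.2, s.2.1, s.1)
  | .z, s => (s.2.1, reflS s.1, s.2.2)

def infCountS (s : SymT) : ℕ :=
  (if isInfS s.1 then 1 else 0) + (if isInfS s.2.1 then 1 else 0) +
    (if isInfS s.2.2 then 1 else 0)

def zeroCountS (s : SymT) : ℕ :=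
  (if isZeroS s.1 then 1 else 0) + (if isZeroS s.2.1 then 1 else 0) +
    (if isZeroS s.2.2 then 1 else 0)

def axSucc : Axis → Axis
  | .x => .y | .y => .z | .z => .x

def finAxisS (s : SymT) : Axis :=
  if isInfS s.1 then (if isInfS s.2.1 then .z else .y) else .x

def negP (s : SymT) : Bool :=
  xor (negS s.1) (xor (negS s.2.1) (negS s.2.2))

def parS (s : SymT) (t : Axis) : Bool :=
  xor (negP s) (decide (t = axSucc (finAxisS s)))

variable {L : Type u}

theorem symOf_reflect (c : ExtCoord L) : symOf c.reflect = reflS (symOf c) := by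
  cases c <;> rfl

theorem isInfS_symOf (c : ExtCoord L) : isInfS (symOf c) = c.isInfB := by
  cases c <;> rfl

theorem isZeroS_symOf (c : ExtCoord L) : isZeroS (symOf c) = c.isZeroB := by
  cases c <;> rfl

theorem symT_rot (i : Axis) (p : Triple L) : symT (rot i p) = rotS i (symT p) := by
  cases i <;> simp [rot, rotS, symT, symOf_reflect]

theorem symT_rotInv (i : Axis) (p : Triple L) : symT (rotInv i p) = rotInvS i (symT p) := by
  cases i <;> simp [rotInv, rotInvS, symT, symOf_reflect]

theorem coordS_symT (j : Axis) (p : Triple L) : coordS j (symT p) = symOf (p.coord j) := by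
  cases j <;> rfl

theorem infCountS_symT (p : Triple L) : infCountS (symT p) = infCount p := by
  simp [infCountS, infCount, symT, isInfS_symOf]

theorem zeroCountS_symT (p : Triple L) : zeroCountS (symT p) = zeroCount p := by
  simp [zeroCountS, zeroCount, symT, isZeroS_symOf]

theorem zeroCount_rot (i : Axis) (p : Triple L) : zeroCount (rot i p) = zeroCount p := by
  obtain ⟨a, b, c⟩ := p
  cases i <;> cases a <;> cases b <;> cases c <;> rfl

theorem zeroCount_rotInv (i : Axis) (p : Triple L) : zeroCount (rotInv i p) = zeroCount p := by
  obtain ⟨a, b, c⟩ := p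
  cases i <;> cases a <;> cases b <;> cases c <;> rfl

set_option maxRecDepth 100000 in
theorem parS_rotS : ∀ (i : Axis) (s : SymT) (t : Axis), infCountS s = 2 → zeroCountS s = 0 →
    isInfS (coordS t s) = true → parS (rotS i s) (tagMap i t) = parS s t := by decide

set_option maxRecDepth 100000 in
theorem parS_rotInvS : ∀ (i : Axis) (s : SymT) (t : Axis), infCountS s = 2 → zeroCountS s = 0 →
    isInfS (coordS t s) = true → parS (rotInvS i s) (tagMap i t) = parS s t := by decide

theorem bool_xor_cancel : ∀ a b c : Bool, xor a c = xor b c → a = b := by decide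

theorem bool_xor3 : ∀ a b c a' b' c' : Bool,
    xor a (xor b c) = xor a' (xor b' c') → a = a' → b = b' → c = c' := by decide

theorem sym_det : ∀ c c' : Sym, isInfS c = false → isInfS c' = false →
    isZeroS c = false → isZeroS c' = false → negS c = negS c' → c = c' := by decide

theorem finAxisS_congr {s s' : SymT} (h1 : isInfS s.1 = isInfS s'.1)
    (h2 : isInfS s.2.1 = isInfS s'.2.1) : finAxisS s = finAxisS s' := by
  unfold finAxisS; rw [h1, h2]

theorem negP_eq_of {s s' : SymT} (k : Axis)
    (h : ∀ m, m ≠ k → negS (coordS m s) = negS (coordS m s'))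
    (hp : negP s = negP s') : negS (coordS k s) = negS (coordS k s') := by
  have key : ∀ x y z x' y' z' : Bool, xor x (xor y z) = xor x' (xor y' z') →
      ((y = y' → z = z' → x = x') ∧ (x = x' → z = z' → y = y') ∧
        (x = x' → y = y' → z = z')) := by decide
  unfold negP at hp
  cases k
  · exact (key _ _ _ _ _ _ hp).1 (h .y (by decide)) (h .z (by decide))
  · exact (key _ _ _ _ _ _ hp).2.1 (h .x (by decide)) (h .z (by decide))
  · exact (key _ _ _ _ _ _ hp).2.2 (h .x (by decide)) (h .y (by decide))

set_option maxRecDepth 100000 in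
theorem inf2_thirdS : ∀ (s : SymT) (j j' k : Axis), infCountS s = 2 →
    isInfS (coordS j s) = true → isInfS (coordS j' s) = true →
    j ≠ j' → k ≠ j → k ≠ j' → isInfS (coordS k s) = false := by decide

set_option maxRecDepth 100000 in
theorem zeroFreeS : ∀ (s : SymT) (k : Axis), zeroCountS s = 0 →
    isZeroS (coordS k s) = false := by decide

theorem faceColor_inj : ∀ {a : Axis} {b : Bool} {a' : Axis} {b' : Bool},
    faceColor a b = faceColor a' b' → a = a' ∧ b = b' := by decide

theorem axis_cover : ∀ j j' : Axis, j ≠ j' →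
    ∃ k, k ≠ j ∧ k ≠ j' ∧ ∀ m, m = j ∨ m = j' ∨ m = k := by decide

theorem axis_all : ∀ j j' j'' m : Axis, j ≠ j' → j ≠ j'' → j' ≠ j'' →
    m = j ∨ m = j' ∨ m = j'' := by decide

theorem tagMap_inj {i a b : Axis} (h : tagMap i a = tagMap i b) : a = b := by
  have := congrArg (tagMap i) h
  simpa using this

end Aux

section Aux2

variable {L : Type u}

/-! #### The finite-coordinate element invariant -/

def uC (a : L) (c : ExtCoord L) : Prop := c = .pos a ∨ c = .neg a

theorem uC_reflect {a : L} {c : ExtCoord L} : uC a c.reflect ↔ uC a c := by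
  cases c <;> simp [ExtCoord.reflect, uC]

def uMem (a : L) (p : Triple L) : Prop :=
  uC a (p.coord .x) ∨ uC a (p.coord .y) ∨ uC a (p.coord .z)

theorem uMem_rot {a : L} (i : Axis) (p : Triple L) : uMem a (rot i p) ↔ uMem a p := by
  cases i <;> simp [rot, uMem, Triple.coord, uC_reflect] <;> tauto

theorem uMem_rotInv {a : L} (i : Axis) (p : Triple L) : uMem a (rotInv i p) ↔ uMem a p := by
  cases i <;> simp [rotInv, uMem, Triple.coord, uC_reflect] <;> tauto

theorem uC_not_inf {a : L} {c : ExtCoord L} (h : uC a c) : c.isInfB = false := by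
  rcases h with rfl | rfl <;> rfl

theorem symOf_inj_uC {a : L} {c c' : ExtCoord L} (h : symOf c = symOf c')
    (h1 : uC a c) (h2 : uC a c') : c = c' := by
  rcases h1 with rfl | rfl <;> rcases h2 with rfl | rfl <;> first | rfl | simp [symOf] at h

theorem exists_uC {c : ExtCoord L} (h1 : c.isInfB = false) (h2 : c.isZeroB = false) :
    ∃ a, uC a c := by
  cases c <;> simp_all [ExtCoord.isInfB, ExtCoord.isZeroB, uC]

theorem uMem_of_coord {a : L} {p : Triple L} {k : Axis} (h : uC a (p.coord k)) :
    uMem a p := by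
  cases k
  · exact Or.inl h
  · exact Or.inr (Or.inl h)
  · exact Or.inr (Or.inr h)

theorem uC_of_uMem {a : L} {p : Triple L} {k : Axis}
    (hcov : ∀ m : Axis, m = k ∨ (p.coord m).isInfB = true)
    (h : uMem a p) : uC a (p.coord k) := by
  have get : ∀ m : Axis, uC a (p.coord m) → uC a (p.coord k) := by
    intro m hm
    rcases hcov m with rfl | hinf
    · exact hm
    · exact absurd (uC_not_inf hm) (by simp [hinf])
  rcases h with h | h | h
  · exact get .x h
  · exact get .y h
  · exact get .z h

/-! #### The preservation predicate on permutations of the edged cube -/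

structure Pres (π : Equiv.Perm (ECell L)) : Prop where
  infc : ∀ c : ECell L, infCount (π c).1.1 = infCount c.1.1
  zeroc : ∀ c : ECell L, zeroCount (π c).1.1 = zeroCount c.1.1
  par : ∀ c : ECell L, infCount c.1.1 = 2 → zeroCount c.1.1 = 0 →
    parS (symT (π c).1.1) (π c).1.2 = parS (symT c.1.1) c.1.2
  umem : ∀ (c : ECell L) (a : L), uMem a (π c).1.1 ↔ uMem a c.1.1
  coup : ∀ c c' : ECell L, Coupled c c' → Coupled (π c) (π c')

def Pres2 (π : Equiv.Perm (ECell L)) : Prop := Pres π ∧ Pres π⁻¹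

theorem Pres_one : Pres (1 : Equiv.Perm (ECell L)) :=
  ⟨fun _ => rfl, fun _ => rfl, fun _ _ _ => rfl, fun _ _ => Iff.rfl, fun _ _ h => h⟩

theorem Pres_mul {π ρ : Equiv.Perm (ECell L)} (hπ : Pres π) (hρ : Pres ρ) :
    Pres (π * ρ) := by
  refine ⟨fun c => ?_, fun c => ?_, fun c h2 h0 => ?_, fun c a => ?_, fun c c' h => ?_⟩
  · rw [Equiv.Perm.mul_apply]; exact (hπ.infc (ρ c)).trans (hρ.infc c)
  · rw [Equiv.Perm.mul_apply]; exact (hπ.zeroc (ρ c)).trans (hρ.zeroc c)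
  · rw [Equiv.Perm.mul_apply]
    exact (hπ.par (ρ c) (by rw [hρ.infc c]; exact h2) (by rw [hρ.zeroc c]; exact h0)).trans
      (hρ.par c h2 h0)
  · rw [Equiv.Perm.mul_apply]; exact (hπ.umem (ρ c) a).trans (hρ.umem c a)
  · rw [Equiv.Perm.mul_apply, Equiv.Perm.mul_apply]
    exact hπ.coup _ _ (hρ.coup _ _ h)

theorem Pres2_one : Pres2 (1 : Equiv.Perm (ECell L)) := ⟨Pres_one, by rw [inv_one]; exact Pres_one⟩

theorem Pres2_mul {π ρ : Equiv.Perm (ECell L)} (hπ : Pres2 π) (hρ : Pres2 ρ) :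
    Pres2 (π * ρ) :=
  ⟨Pres_mul hπ.1 hρ.1, by rw [mul_inv_rev]; exact Pres_mul hρ.2 hπ.2⟩

theorem Pres2_inv {π : Equiv.Perm (ECell L)} (hπ : Pres2 π) : Pres2 π⁻¹ :=
  ⟨hπ.2, by rw [inv_inv]; exact hπ.1⟩

theorem equarterTurn_apply (i : Axis) (α : ExtCoord L) (c : ECell L) :
    ((equarterTurn i α c : ECell L)).1 = eqtFun i α c.1 := rfl

theorem equarterTurn_inv_apply (i : Axis) (α : ExtCoord L) (c : ECell L) :
    (((equarterTurn i α)⁻¹ c : ECell L)).1 = eqtFunInv i α c.1 := rfl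

theorem Pres_equarterTurn (i : Axis) (α : ExtCoord L) : Pres (equarterTurn i α) := by
  classical
  refine ⟨fun c => ?_, fun c => ?_, fun c h2 h0 => ?_, fun c a => ?_, fun c c' h => ?_⟩
  · show infCount (eqtFun i α c.1).1 = _
    by_cases h : c.1.1.coord i = α <;> simp [eqtFun, h, infCount_rot]
  · show zeroCount (eqtFun i α c.1).1 = _
    by_cases h : c.1.1.coord i = α <;> simp [eqtFun, h, zeroCount_rot]
  · show parS (symT (eqtFun i α c.1).1) (eqtFun i α c.1).2 = _
    by_cases h : c.1.1.coord i = α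
    · simp only [eqtFun, h, if_pos rfl, if_true]
      rw [symT_rot]
      exact parS_rotS i _ c.1.2 (by rw [infCountS_symT]; exact h2)
        (by rw [zeroCountS_symT]; exact h0)
        (by rw [coordS_symT, isInfS_symOf]; exact c.2)
    · simp [eqtFun, h]
  · show uMem a (eqtFun i α c.1).1 ↔ _
    by_cases h : c.1.1.coord i = α <;> simp [eqtFun, h, uMem_rot]
  · obtain ⟨hp, ht⟩ := h
    constructor
    · show (eqtFun i α c.1).1 = (eqtFun i α c'.1).1
      by_cases h : c.1.1.coord i = α
      · have h' : c'.1.1.coord i = α := by rw [← hp]; exact h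
        simp [eqtFun, h, h', hp]
      · have h' : ¬ c'.1.1.coord i = α := by rw [← hp]; exact h
        simp [eqtFun, h, h', hp]
    · show (eqtFun i α c.1).2 ≠ (eqtFun i α c'.1).2
      by_cases h : c.1.1.coord i = α
      · have h' : c'.1.1.coord i = α := by rw [← hp]; exact h
        simp only [eqtFun, h, h', if_true, if_pos rfl]
        exact fun he => ht (tagMap_inj he)
      · have h' : ¬ c'.1.1.coord i = α := by rw [← hp]; exact h
        simpa [eqtFun, h, h'] using ht

theorem Pres_equarterTurn_inv (i : Axis) (α : ExtCoord L) : Pres (equarterTurn i α)⁻¹ := by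
  classical
  refine ⟨fun c => ?_, fun c => ?_, fun c h2 h0 => ?_, fun c a => ?_, fun c c' h => ?_⟩
  · show infCount (eqtFunInv i α c.1).1 = _
    by_cases h : c.1.1.coord i = α <;> simp [eqtFunInv, h, infCount_rotInv]
  · show zeroCount (eqtFunInv i α c.1).1 = _
    by_cases h : c.1.1.coord i = α <;> simp [eqtFunInv, h, zeroCount_rotInv]
  · show parS (symT (eqtFunInv i α c.1).1) (eqtFunInv i α c.1).2 = _
    by_cases h : c.1.1.coord i = α
    · simp only [eqtFunInv, h, if_pos rfl, if_true]
      rw [symT_rotInv]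
      exact parS_rotInvS i _ c.1.2 (by rw [infCountS_symT]; exact h2)
        (by rw [zeroCountS_symT]; exact h0)
        (by rw [coordS_symT, isInfS_symOf]; exact c.2)
    · simp [eqtFunInv, h]
  · show uMem a (eqtFunInv i α c.1).1 ↔ _
    by_cases h : c.1.1.coord i = α <;> simp [eqtFunInv, h, uMem_rotInv]
  · obtain ⟨hp, ht⟩ := h
    constructor
    · show (eqtFunInv i α c.1).1 = (eqtFunInv i α c'.1).1
      by_cases h : c.1.1.coord i = α
      · have h' : c'.1.1.coord i = α := by rw [← hp]; exact h
        simp [eqtFunInv, h, h', hp]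
      · have h' : ¬ c'.1.1.coord i = α := by rw [← hp]; exact h
        simp [eqtFunInv, h, h', hp]
    · show (eqtFunInv i α c.1).2 ≠ (eqtFunInv i α c'.1).2
      by_cases h : c.1.1.coord i = α
      · have h' : c'.1.1.coord i = α := by rw [← hp]; exact h
        simp only [eqtFunInv, h, h', if_true, if_pos rfl]
        exact fun he => ht (tagMap_inj he)
      · have h' : ¬ c'.1.1.coord i = α := by rw [← hp]; exact h
        simpa [eqtFunInv, h, h'] using ht

theorem pres_of_mem {g : Equiv.Perm (ECell L)} (hg : g ∈ etwistGroup L) : Pres2 g := by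
  refine Subgroup.closure_induction (p := fun x _ => Pres2 x) ?_ Pres2_one
    (fun x y _ _ hx hy => Pres2_mul hx hy) (fun x _ hx => Pres2_inv hx) hg
  rintro x ⟨i, α, rfl | rfl | rfl⟩
  · exact ⟨Pres_equarterTurn i α, Pres_equarterTurn_inv i α⟩
  · have h : equarterTurn i α ^ 2 = equarterTurn i α * equarterTurn i α := sq _
    rw [h]
    exact Pres2_mul ⟨Pres_equarterTurn i α, Pres_equarterTurn_inv i α⟩
      ⟨Pres_equarterTurn i α, Pres_equarterTurn_inv i α⟩
  · exact ⟨Pres_equarterTurn_inv i α, by rw [inv_inv]; exact Pres_equarterTurn i α⟩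

theorem ecluster_facts {e c : ECell L} (h : c ∈ ecluster e) :
    infCount c.1.1 = infCount e.1.1 ∧ zeroCount c.1.1 = zeroCount e.1.1 ∧
    (infCount e.1.1 = 2 → zeroCount e.1.1 = 0 →
      parS (symT c.1.1) c.1.2 = parS (symT e.1.1) e.1.2) ∧
    (∀ a : L, uMem a c.1.1 ↔ uMem a e.1.1) := by
  obtain ⟨g, hg, rfl⟩ := h
  have P := (pres_of_mem hg).1
  exact ⟨P.infc e, P.zeroc e, P.par e, P.umem e⟩

end Aux2

section Aux3

variable {L : Type u}

theorem ecell_eq {c c' : ECell L} (h1 : c.1.1 = c'.1.1) (h2 : c.1.2 = c'.1.2) : c = c' :=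
  Subtype.ext (Prod.ext h1 h2)

theorem triple_ext_all {p q : Triple L} (h : ∀ m, p.coord m = q.coord m) : p = q := by
  obtain ⟨a, b, c⟩ := p; obtain ⟨a', b', c'⟩ := q
  have h1 := h .x; have h2 := h .y; have h3 := h .z
  simp only [Triple.coord] at h1 h2 h3
  subst h1; subst h2; subst h3; rfl

theorem neg_of_inf {d : ExtCoord L} (h : d.isInfB = true) (h' : d ≠ .posInf) :
    d = .negInf := by
  cases d <;> simp_all [ExtCoord.isInfB]

theorem efSolved_color {c c' : ECell L} (h : efSolved L c = efSolved L c') :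
    c.1.2 = c'.1.2 ∧ c.1.1.coord c.1.2 = c'.1.1.coord c'.1.2 := by
  classical
  by_cases h1 : c.1.1.coord c.1.2 = ExtCoord.posInf <;>
    by_cases h2 : c'.1.1.coord c'.1.2 = ExtCoord.posInf <;>
    simp only [efSolved, h1, h2, if_true, if_false, if_pos, if_neg, not_false_iff,
      Option.some.injEq] at h
  · exact ⟨(faceColor_inj h).1, h1.trans h2.symm⟩
  · exact absurd (faceColor_inj h).2 (by simp)
  · exact absurd (faceColor_inj h).2 (by simp)
  · exact ⟨(faceColor_inj h).1,
      (neg_of_inf c.2 h1).trans (neg_of_inf c'.2 h2).symm⟩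

/-- The key invariant: the statement of the theorem, as a predicate on configurations. -/
def Inv (f : ECell L → Option Color) : Prop :=
  (∀ (γ γ' : Color) (e : ECell L),
      IsEdgeCell e → ¬ IsCornerCell e → ¬ IsEdgeCross e →
      ∀ c₁ c₁' c₂ c₂' : ECell L,
        c₁ ∈ ecluster e → Coupled c₁ c₁' → f c₁ = some γ → f c₁' = some γ' →
        c₂ ∈ ecluster e → Coupled c₂ c₂' → f c₂ = some γ → f c₂' = some γ' →
        c₁ = c₂ ∧ c₁' = c₂') ∧
  (∀ (γ γ' γ'' : Color) (c₁ c₁' c₁'' c₂ c₂' c₂'' : ECell L),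
      IsCornerCell c₁ → Coupled c₁ c₁' → Coupled c₁ c₁'' → Coupled c₁' c₁'' →
      f c₁ = some γ → f c₁' = some γ' → f c₁'' = some γ'' →
      IsCornerCell c₂ → Coupled c₂ c₂' → Coupled c₂ c₂'' → Coupled c₂' c₂'' →
      f c₂ = some γ → f c₂' = some γ' → f c₂'' = some γ'' →
      c₁ = c₂ ∧ c₁' = c₂' ∧ c₁'' = c₂'')

theorem inv_efSolved : Inv (efSolved L) := by
  constructor
  · intro γ γ' e he _ hncx c₁ c₁' c₂ c₂' hm₁ hcp₁ hf₁ hf₁' hm₂ hcp₂ hf₂ hf₂'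
    have hze : zeroCount e.1.1 = 0 := by
      by_contra hz
      exact hncx ⟨he, Nat.pos_of_ne_zero hz⟩
    have hie : infCount e.1.1 = 2 := he
    obtain ⟨hi₁, hz₁, hpar₁, hum₁⟩ := ecluster_facts hm₁
    obtain ⟨hi₂, hz₂, hpar₂, hum₂⟩ := ecluster_facts hm₂
    rw [hie] at hi₁ hi₂; rw [hze] at hz₁ hz₂
    obtain ⟨ht, hcoord⟩ := efSolved_color (hf₁.trans hf₂.symm)
    obtain ⟨ht', hcoord'⟩ := efSolved_color (hf₁'.trans hf₂'.symm)
    have hne : c₁.1.2 ≠ c₁'.1.2 := hcp₁.2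
    have hj_p : (c₁.1.1.coord c₁.1.2).isInfB = true := c₁.2
    have hj'_p : (c₁.1.1.coord c₁'.1.2).isInfB = true := by rw [hcp₁.1]; exact c₁'.2
    have hvj : c₁.1.1.coord c₁.1.2 = c₂.1.1.coord c₁.1.2 := by rw [hcoord, ht]
    have hvj' : c₁.1.1.coord c₁'.1.2 = c₂.1.1.coord c₁'.1.2 := by
      rw [hcp₁.1, hcp₂.1, hcoord', ht']
    have hj_q : (c₂.1.1.coord c₁.1.2).isInfB = true := by rw [← hvj]; exact hj_p
    have hj'_q : (c₂.1.1.coord c₁'.1.2).isInfB = true := by rw [← hvj']; exact hj'_p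
    obtain ⟨k, hkj, hkj', hcov⟩ := axis_cover c₁.1.2 c₁'.1.2 hne
    -- the third coordinate is neither infinite nor zero
    have hkinf_p : isInfS (coordS k (symT c₁.1.1)) = false :=
      inf2_thirdS _ _ _ _ (by rw [infCountS_symT]; exact hi₁)
        (by rw [coordS_symT, isInfS_symOf]; exact hj_p)
        (by rw [coordS_symT, isInfS_symOf]; exact hj'_p) hne hkj hkj'
    have hkinf_q : isInfS (coordS k (symT c₂.1.1)) = false :=
      inf2_thirdS _ _ _ _ (by rw [infCountS_symT]; exact hi₂)
        (by rw [coordS_symT, isInfS_symOf]; exact hj_q)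
        (by rw [coordS_symT, isInfS_symOf]; exact hj'_q) hne hkj hkj'
    have hkzero_p : isZeroS (coordS k (symT c₁.1.1)) = false :=
      zeroFreeS _ _ (by rw [zeroCountS_symT]; exact hz₁)
    have hkzero_q : isZeroS (coordS k (symT c₂.1.1)) = false :=
      zeroFreeS _ _ (by rw [zeroCountS_symT]; exact hz₂)
    obtain ⟨a, hua⟩ := exists_uC
      (by rw [← isInfS_symOf, ← coordS_symT]; exact hkinf_p)
      (by rw [← isZeroS_symOf, ← coordS_symT]; exact hkzero_p)
    have hcov_q : ∀ m : Axis, m = k ∨ (c₂.1.1.coord m).isInfB = true := by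
      intro m
      rcases hcov m with rfl | rfl | rfl
      · exact Or.inr hj_q
      · exact Or.inr hj'_q
      · exact Or.inl rfl
    have huq : uC a (c₂.1.1.coord k) :=
      uC_of_uMem hcov_q ((hum₂ a).mpr ((hum₁ a).mp (uMem_of_coord hua)))
    -- inf patterns agree
    have hinfeq : ∀ m : Axis,
        isInfS (coordS m (symT c₁.1.1)) = isInfS (coordS m (symT c₂.1.1)) := by
      intro m
      rcases hcov m with rfl | rfl | rfl
      · rw [coordS_symT, coordS_symT, hvj]
      · rw [coordS_symT, coordS_symT, hvj']
      · rw [hkinf_p, hkinf_q]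
    have hfa : finAxisS (symT c₁.1.1) = finAxisS (symT c₂.1.1) :=
      finAxisS_congr (hinfeq .x) (hinfeq .y)
    -- parities agree
    have hp12 : parS (symT c₁.1.1) c₁.1.2 = parS (symT c₂.1.1) c₂.1.2 :=
      (hpar₁ hie hze).trans (hpar₂ hie hze).symm
    rw [← ht] at hp12
    have hnp : negP (symT c₁.1.1) = negP (symT c₂.1.1) := by
      refine bool_xor_cancel _ _ (decide (c₁.1.2 = axSucc (finAxisS (symT c₁.1.1)))) ?_
      unfold parS at hp12
      rw [hfa] at hp12 ⊢
      exact hp12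
    have hnegk : negS (coordS k (symT c₁.1.1)) = negS (coordS k (symT c₂.1.1)) := by
      refine negP_eq_of k ?_ hnp
      intro m hm
      rcases hcov m with rfl | rfl | rfl
      · rw [coordS_symT, coordS_symT, hvj]
      · rw [coordS_symT, coordS_symT, hvj']
      · exact absurd rfl hm
    have hsymk : symOf (c₁.1.1.coord k) = symOf (c₂.1.1.coord k) := by
      rw [← coordS_symT, ← coordS_symT]
      exact sym_det _ _ hkinf_p hkinf_q hkzero_p hkzero_q hnegk
    have hvk : c₁.1.1.coord k = c₂.1.1.coord k := symOf_inj_uC hsymk hua huq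
    have hpq : c₁.1.1 = c₂.1.1 := by
      apply triple_ext_all
      intro m
      rcases hcov m with rfl | rfl | rfl
      · exact hvj
      · exact hvj'
      · exact hvk
    exact ⟨ecell_eq hpq ht, ecell_eq (hcp₁.1.symm.trans (hpq.trans hcp₂.1)) ht'⟩
  · intro γ γ' γ'' c₁ c₁' c₁'' c₂ c₂' c₂'' _ h12 h13 h23 hf1 hf1' hf1'' _ k12 k13 k23
      hf2 hf2' hf2''
    obtain ⟨ht, hc⟩ := efSolved_color (hf1.trans hf2.symm)
    obtain ⟨ht', hc'⟩ := efSolved_color (hf1'.trans hf2'.symm)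
    obtain ⟨ht'', hc''⟩ := efSolved_color (hf1''.trans hf2''.symm)
    have hpq : c₁.1.1 = c₂.1.1 := by
      apply triple_ext_all
      intro m
      rcases axis_all c₁.1.2 c₁'.1.2 c₁''.1.2 m h12.2 h13.2 h23.2 with rfl | rfl | rfl
      · rw [ht] at hc ⊢
        exact hc
      · rw [h12.1, k12.1, ht'] 
        rw [ht'] at hc'
        exact hc'
      · rw [h13.1, k13.1, ht'']
        rw [ht''] at hc''
        exact hc''
    exact ⟨ecell_eq hpq ht,
      ecell_eq (h12.1.symm.trans (hpq.trans k12.1)) ht',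
      ecell_eq (h13.1.symm.trans (hpq.trans k13.1)) ht''⟩

theorem inv_transport (π : Equiv.Perm (ECell L)) (hπ : π ∈ etwistGroup L)
    (f : ECell L → Option Color) (h : Inv f) : Inv (fun c => f (π⁻¹ c)) := by
  have hπi : π⁻¹ ∈ etwistGroup L := inv_mem hπ
  have P : Pres π⁻¹ := (pres_of_mem hπi).1
  constructor
  · intro γ γ' e he hnc hncx c₁ c₁' c₂ c₂' hm₁ hcp₁ hf₁ hf₁' hm₂ hcp₂ hf₂ hf₂'
    have hm₁' : π⁻¹ c₁ ∈ ecluster e := by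
      obtain ⟨g, hg, rfl⟩ := hm₁
      exact ⟨π⁻¹ * g, mul_mem hπi hg, rfl⟩
    have hm₂' : π⁻¹ c₂ ∈ ecluster e := by
      obtain ⟨g, hg, rfl⟩ := hm₂
      exact ⟨π⁻¹ * g, mul_mem hπi hg, rfl⟩
    obtain ⟨e1, e2⟩ := h.1 γ γ' e he hnc hncx (π⁻¹ c₁) (π⁻¹ c₁') (π⁻¹ c₂) (π⁻¹ c₂')
      hm₁' (P.coup _ _ hcp₁) hf₁ hf₁' hm₂' (P.coup _ _ hcp₂) hf₂ hf₂'
    constructor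
    · have := congrArg π e1; simpa using this
    · have := congrArg π e2; simpa using this
  · intro γ γ' γ'' c₁ c₁' c₁'' c₂ c₂' c₂'' hcor1 h12 h13 h23 hf1 hf1' hf1'' hcor2 k12 k13 k23
      hf2 hf2' hf2''
    have hcor1' : IsCornerCell (π⁻¹ c₁) := by
      show infCount (π⁻¹ c₁).1.1 = 3
      rw [P.infc c₁]; exact hcor1
    have hcor2' : IsCornerCell (π⁻¹ c₂) := by
      show infCount (π⁻¹ c₂).1.1 = 3
      rw [P.infc c₂]; exact hcor2
    obtain ⟨e1, e2, e3⟩ := h.2 γ γ' γ'' (π⁻¹ c₁) (π⁻¹ c₁') (π⁻¹ c₁'') (π⁻¹ c₂) (π⁻¹ c₂')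
      (π⁻¹ c₂'') hcor1' (P.coup _ _ h12) (P.coup _ _ h13) (P.coup _ _ h23) hf1 hf1' hf1''
      hcor2' (P.coup _ _ k12) (P.coup _ _ k13) (P.coup _ _ k23) hf2 hf2' hf2''
    refine ⟨?_, ?_, ?_⟩
    · have := congrArg π e1; simpa using this
    · have := congrArg π e2; simpa using this
    · have := congrArg π e3; simpa using this

end Aux3

section Aux4

variable {L : Type u}

theorem run_zero {Cl : Type v} {X : Type u} (σ : Ordinal.{v} → Equiv.Perm Cl)
    (f0 : Cl → Option X) : run σ f0 0 = f0 :=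
  Ordinal.limitRecOn_zero (motive := fun _ => Cl → Option X) _ _ _

theorem run_succ {Cl : Type v} {X : Type u} (σ : Ordinal.{v} → Equiv.Perm Cl)
    (f0 : Cl → Option X) (η : Ordinal.{v}) :
    run σ f0 (Order.succ η) = fun c => run σ f0 η ((σ η)⁻¹ c) :=
  Ordinal.limitRecOn_succ (motive := fun _ => Cl → Option X) _ _ _ _

theorem run_limit {Cl : Type v} {X : Type u} (σ : Ordinal.{v} → Equiv.Perm Cl)
    (f0 : Cl → Option X) {lam : Ordinal.{v}} (hlam : Order.IsSuccLimit lam) :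
    run σ f0 lam = fun c => eventualVal lam (fun η _ => run σ f0 η c) :=
  Ordinal.limitRecOn_limit (motive := fun _ => Cl → Option X) _ _ _ _ hlam

theorem eventualVal_some {X : Type u} {lam : Ordinal.{v}} {g : ∀ η, η < lam → Option X}
    {v : X} (h : eventualVal lam g = some v) :
    ∃ γ, γ < lam ∧ ∀ η (hη : η < lam), γ ≤ η → g η hη = some v := by
  classical
  unfold eventualVal at h
  split at h
  · next hex =>
    obtain ⟨γ, hγ, hs⟩ := hex.choose_spec
    have hv : hex.choose = v := by
      injection h
    exact ⟨γ, hγ, by rw [← hv]; exact hs⟩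
  · exact absurd h (by simp)

theorem inv_run (s : EBasicSeq L) (f0 : ECell L → Option Color) (h0 : Inv f0) :
    ∀ θ : Ordinal.{u}, θ ≤ s.len → Inv (run s.seq f0 θ) := by
  intro θ
  induction θ using Ordinal.limitRecOn with
  | zero =>
    intro _
    rw [run_zero]
    exact h0
  | add_one η IH =>
    intro hle
    rw [Ordinal.add_one_eq_succ] at hle ⊢
    have hη : η < s.len := lt_of_lt_of_le (Order.lt_succ η) hle
    rw [run_succ]
    exact inv_transport (s.seq η) (Subgroup.subset_closure (s.basic η hη)) _ (IH hη.le)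
  | limit lam hlim IH =>
    intro hle
    rw [run_limit s.seq f0 hlim]
    constructor
    · intro γ γ' e he hnc hncx c₁ c₁' c₂ c₂' hm₁ hcp₁ hf₁ hf₁' hm₂ hcp₂ hf₂ hf₂'
      obtain ⟨γ₁, hγ₁, hs₁⟩ := eventualVal_some hf₁
      obtain ⟨γ₂, hγ₂, hs₂⟩ := eventualVal_some hf₁'
      obtain ⟨γ₃, hγ₃, hs₃⟩ := eventualVal_some hf₂
      obtain ⟨γ₄, hγ₄, hs₄⟩ := eventualVal_some hf₂'
      set δ := max (max γ₁ γ₂) (max γ₃ γ₄) with hδ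
      have hδlt : δ < lam := by
        apply max_lt (max_lt hγ₁ hγ₂) (max_lt hγ₃ hγ₄)
      have hδle : δ ≤ s.len := le_of_lt (lt_of_lt_of_le hδlt hle)
      refine (IH δ hδlt hδle).1 γ γ' e he hnc hncx c₁ c₁' c₂ c₂' hm₁ hcp₁ ?_ ?_ hm₂ hcp₂ ?_ ?_
      · exact hs₁ δ hδlt (le_max_left _ _ |>.trans (le_max_left _ _))
      · exact hs₂ δ hδlt (le_max_right _ _ |>.trans (le_max_left _ _))
      · exact hs₃ δ hδlt (le_max_left _ _ |>.trans (le_max_right _ _))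
      · exact hs₄ δ hδlt (le_max_right _ _ |>.trans (le_max_right _ _))
    · intro γ γ' γ'' c₁ c₁' c₁'' c₂ c₂' c₂'' hcor1 h12 h13 h23 hf1 hf1' hf1'' hcor2 k12 k13
        k23 hf2 hf2' hf2''
      obtain ⟨γ₁, hγ₁, hs₁⟩ := eventualVal_some hf1
      obtain ⟨γ₂, hγ₂, hs₂⟩ := eventualVal_some hf1'
      obtain ⟨γ₃, hγ₃, hs₃⟩ := eventualVal_some hf1''
      obtain ⟨γ₄, hγ₄, hs₄⟩ := eventualVal_some hf2
      obtain ⟨γ₅, hγ₅, hs₅⟩ := eventualVal_some hf2'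
      obtain ⟨γ₆, hγ₆, hs₆⟩ := eventualVal_some hf2''
      set δ := max (max (max γ₁ γ₂) (max γ₃ γ₄)) (max γ₅ γ₆) with hδ
      have hδlt : δ < lam :=
        max_lt (max_lt (max_lt hγ₁ hγ₂) (max_lt hγ₃ hγ₄)) (max_lt hγ₅ hγ₆)
      have hδle : δ ≤ s.len := le_of_lt (lt_of_lt_of_le hδlt hle)
      refine (IH δ hδlt hδle).2 γ γ' γ'' c₁ c₁' c₁'' c₂ c₂' c₂'' hcor1 h12 h13 h23
        ?_ ?_ ?_ hcor2 k12 k13 k23 ?_ ?_ ?_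
      · exact hs₁ δ hδlt ((le_max_left _ _).trans ((le_max_left _ _).trans (le_max_left _ _)))
      · exact hs₂ δ hδlt ((le_max_right _ _).trans ((le_max_left _ _).trans (le_max_left _ _)))
      · exact hs₃ δ hδlt ((le_max_left _ _).trans ((le_max_right _ _).trans (le_max_left _ _)))
      · exact hs₄ δ hδlt ((le_max_right _ _).trans ((le_max_right _ _).trans (le_max_left _ _)))
      · exact hs₅ δ hδlt ((le_max_left _ _).trans (le_max_right _ _))
      · exact hs₆ δ hδlt ((le_max_right _ _).trans (le_max_right _ _))

theorem inv_of_accessible {f : ECell L → Option Color}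
    (hf : Accessible (IsEBasic L) (efSolved L) f) : Inv f := by
  obtain ⟨s, _, hterm⟩ := hf
  have h := inv_run s (efSolved L) inv_efSolved s.len le_rfl
  rw [show run s.seq (efSolved L) s.len = s.terminal (efSolved L) from rfl, hterm] at h
  exact h

end Aux4

end InfRubik
open InfRubik in
/-- In a legal configuration of the edged cube accessible from the solved configuration,
for each pair of colors and each non-corner edge cluster there is at most one pair of
coupled edge cells carrying those colors, and for each triple of colors there is at most
one triple of mutually coupled corner cells carrying those colors. -/
theorem color_coupling {L : Type u} [Infinite L] (f : ECell L → Option Color)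
    (hf : Accessible (IsEBasic L) (efSolved L) f) :
    (∀ (γ γ' : Color) (e : ECell L),
      IsEdgeCell e → ¬ IsCornerCell e → ¬ IsEdgeCross e →
      ∀ c₁ c₁' c₂ c₂' : ECell L,
        c₁ ∈ ecluster e → Coupled c₁ c₁' → f c₁ = some γ → f c₁' = some γ' →
        c₂ ∈ ecluster e → Coupled c₂ c₂' → f c₂ = some γ → f c₂' = some γ' →
        c₁ = c₂ ∧ c₁' = c₂') ∧
    (∀ (γ γ' γ'' : Color) (c₁ c₁' c₁'' c₂ c₂' c₂'' : ECell L),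
        IsCornerCell c₁ → Coupled c₁ c₁' → Coupled c₁ c₁'' → Coupled c₁' c₁'' →
        f c₁ = some γ → f c₁' = some γ' → f c₁'' = some γ'' →
        IsCornerCell c₂ → Coupled c₂ c₂' → Coupled c₂ c₂'' → Coupled c₂' c₂'' →
        f c₂ = some γ → f c₂' = some γ' → f c₂'' = some γ'' →
        c₁ = c₂ ∧ c₁' = c₂' ∧ c₁'' = c₂'') :=
  inv_of_accessible hf
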